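/- Every finitely generated virtually abelian group H embeds into a semidirect product M ⋊_ρ G, where G is a finite group and M a finitely generated torsion-free abelian group, such that H ∩ M = |G|·M and H surjects onto G. -/

import Mathlib

private lemma exists_good_m (N : Type*) [CommGroup N] [Group.FG N] :
    ∃ m : ℕ, m ≠ 0 ∧ ∀ (y : N) (j : ℕ), j ≠ 0 → y ^ (m * j) = 1 → y ^ m = 1 := by
  obtain ⟨n, ι, fι, p, hp, e, ⟨f⟩⟩ := AddCommGroup.equiv_free_prod_directSum_zmod (Additive N)
  classical
  refine ⟨∏ i, p i ^ e i, Finset.prod_ne_zero_iff.mpr fun i _ => pow_ne_zero _ (hp i).pos.ne', ?_⟩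
  set m := ∏ i, p i ^ e i with hm
  have hm0 : m ≠ 0 := Finset.prod_ne_zero_iff.mpr fun i _ => pow_ne_zero _ (hp i).pos.ne'
  have hd : ∀ d : DirectSum ι fun i => ZMod (p i ^ e i), m • d = 0 := by
    intro d
    refine DFinsupp.ext fun i => ?_
    rw [DFinsupp.smul_apply, nsmul_eq_mul, DFinsupp.zero_apply]
    have : ((m : ZMod (p i ^ e i))) = 0 :=
      (ZMod.natCast_eq_zero_iff _ _).mpr (Finset.dvd_prod_of_mem _ (Finset.mem_univ i))
    rw [this, zero_mul]
  intro y j hj hyj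
  have h1 : (m * j) • (f (Additive.ofMul y)) = 0 := by
    rw [← map_nsmul, ← ofMul_pow, hyj]
    simp
  have ha : (f (Additive.ofMul y)).1 = 0 := by
    have h2 : (m * j) • (f (Additive.ofMul y)).1 = 0 := by
      rw [← Prod.smul_fst, h1, Prod.fst_zero]
    rcases smul_eq_zero.mp h2 with h | h
    · exact absurd h (Nat.mul_ne_zero hm0 hj)
    · exact h
  have key : m • f (Additive.ofMul y) = 0 := by
    rw [Prod.ext_iff]
    constructor
    · rw [Prod.smul_fst, ha, smul_zero, Prod.fst_zero]
    · rw [Prod.smul_snd, hd, Prod.snd_zero]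
  have : m • Additive.ofMul y = 0 := f.injective (by rw [map_nsmul, key, map_zero])
  have := congrArg Additive.toMul this
  simpa using this


/-- The data of an embedding of a group `H` into a semidirect product `M ⋊[ρ] G` with `G`
finite and `M` finitely generated torsion-free abelian (written multiplicatively), such that
`H ∩ M = |G|·M` and `H` surjects onto `G`. -/
structure VirtAbelianEmbedding (H : Type*) [Group H] where
  G : Type
  [grp : Group G]
  [fin : Fintype G]
  M : Type
  [mgrp : CommGroup M]
  fg : Group.FG M
  torsionFree : ∀ (x : M) (n : ℕ), n ≠ 0 → x ^ n = 1 → x = 1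
  ρ : G →* MulAut M
  φ : H →* M ⋊[ρ] G
  inj : Function.Injective φ
  inter : ∀ x : M, SemidirectProduct.inl x ∈ φ.range ↔ ∃ y : M, y ^ Fintype.card G = x
  surj : Function.Surjective (SemidirectProduct.rightHom.comp φ)

/-- Proposition 3.2: every finitely generated virtually abelian group `H` embeds into a
semidirect product `M ⋊_ρ G` with `G` finite and `M` finitely generated torsion-free abelian,
extending `|G|·M` by `G`. -/
theorem stmt10 (H : Type) [Group H] (hfg : Group.FG H)
    (hva : ∃ A : Subgroup H, A.FiniteIndex ∧ ∀ a ∈ A, ∀ b ∈ A, a * b = b * a) :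
    Nonempty (VirtAbelianEmbedding H) := by
  classical
  obtain ⟨A, hAf, hAc⟩ := hva
  haveI : Group.FG H := hfg
  haveI : A.FiniteIndex := hAf
  set N := A.normalCore with hN
  have hNA : N ≤ A := Subgroup.normalCore_le A
  haveI : N.Normal := Subgroup.normalCore_normal A
  haveI : N.FiniteIndex := Subgroup.finiteIndex_normalCore A
  letI iC : CommGroup ↥N :=
    { N.toGroup with
      mul_comm := fun a b => Subtype.ext (hAc a (hNA a.2) b (hNA b.2)) }
  letI iF : @Group.FG ↥N iC.toGroup := ⟨(Subgroup.fg_of_index_ne_zero N).1⟩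
  obtain ⟨m, hm0, hmP⟩ := @exists_good_m ↥N iC iF
  set M' : Subgroup H := Subgroup.map N.subtype (powMonoidHom m : ↥N →* ↥N).range with hM'
  have hmem : ∀ x : H, x ∈ M' ↔ ∃ y : ↥N, (y : H) ^ m = x := by
    intro x
    simp only [hM', Subgroup.mem_map, MonoidHom.mem_range, powMonoidHom_apply]
    constructor
    · rintro ⟨z, ⟨w, rfl⟩, rfl⟩
      exact ⟨w, rfl⟩
    · rintro ⟨y, rfl⟩
      exact ⟨y ^ m, ⟨y, rfl⟩, rfl⟩
  have hMN : M' ≤ N := Subgroup.map_subtype_le _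
  have hMA : M' ≤ A := hMN.trans hNA
  haveI hMnorm : M'.Normal := by
    constructor
    intro x hx g
    rw [hmem] at hx ⊢
    obtain ⟨y, rfl⟩ := hx
    exact ⟨⟨g * (y : H) * g⁻¹, Subgroup.Normal.conj_mem ‹N.Normal› _ y.2 g⟩, by
      simp only [conj_pow]⟩
  -- finite index
  haveI : Finite (↥N ⧸ (powMonoidHom m : ↥N →* ↥N).range) := by
    apply CommGroup.finite_of_fg_torsion
    intro q
    refine isOfFinOrder_iff_pow_eq_one.mpr ⟨m, Nat.pos_of_ne_zero hm0, ?_⟩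
    induction q using QuotientGroup.induction_on with
    | H z =>
      rw [← QuotientGroup.mk_pow, QuotientGroup.eq_one_iff]
      exact ⟨z, rfl⟩
  haveI : M'.FiniteIndex := by
    constructor
    rw [← Subgroup.relIndex_mul_index hMN]
    refine Nat.mul_ne_zero ?_ (Subgroup.FiniteIndex.index_ne_zero)
    have hsub : M'.subgroupOf N = (powMonoidHom m : ↥N →* ↥N).range := by
      rw [hM']
      exact Subgroup.comap_map_eq_self_of_injective N.subtype_injective _
    rw [Subgroup.relIndex, hsub]
    exact Nat.card_pos.ne'
  -- continue
  letI iM : CommGroup ↥M' :=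
    { M'.toGroup with
      mul_comm := fun a b => Subtype.ext (hAc a (hMA a.2) b (hMA b.2)) }
  -- fg of M'
  have hψmem : ∀ y : ↥N, (N.subtype.comp (powMonoidHom m : ↥N →* ↥N)) y ∈ M' := by
    intro y
    exact (hmem _).mpr ⟨y, rfl⟩
  have hψsurj : Function.Surjective
      ((N.subtype.comp (powMonoidHom m : ↥N →* ↥N)).codRestrict M' hψmem) := by
    rintro ⟨x, hx⟩
    obtain ⟨y, hy⟩ := (hmem x).mp hx
    exact ⟨y, Subtype.ext hy⟩
  have iMF : Group.FG ↥M' := Group.fg_of_surjective hψsurj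
  -- torsion-free
  have tf : ∀ (x : ↥M') (k : ℕ), k ≠ 0 → x ^ k = 1 → x = 1 := by
    intro x k hk hxk
    obtain ⟨y, hy⟩ := (hmem (x : H)).mp x.2
    have hcoe : ((x : H)) ^ k = 1 := by
      have := congrArg (Subtype.val) hxk
      rwa [SubgroupClass.coe_pow] at this
    have hym : (y : H) ^ (m * k) = 1 := by rw [pow_mul, hy]; exact hcoe
    have hyN : y ^ (m * k) = 1 := Subtype.ext (by rw [SubgroupClass.coe_pow]; exact hym)
    have := hmP y k hk hyN
    have hxone : (x : H) = 1 := by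
      rw [← hy]
      have := congrArg (Subtype.val) this
      rwa [SubgroupClass.coe_pow] at this
    exact Subtype.ext hxone
  -- quotient
  haveI : Finite (H ⧸ M') := by
    have : Nat.card (H ⧸ M') ≠ 0 := Subgroup.FiniteIndex.index_ne_zero (H := M')
    exact Nat.finite_of_card_ne_zero this
  letI iQ : Fintype (H ⧸ M') := Fintype.ofFinite _
  set π : H →* H ⧸ M' := QuotientGroup.mk' M' with hπ
  have hkeriff : ∀ x : H, π x = 1 ↔ x ∈ M' := fun x => QuotientGroup.eq_one_iff x
  -- the action
  have hcond : ∀ x ∈ M', MulAut.conjNormal x = (1 : MulAut ↥M') := by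
    intro x hx
    ext y
    show ((MulAut.conjNormal x) y : H) = ((1 : MulAut ↥M') y : H)
    rw [MulAut.conjNormal_apply, MulAut.one_apply]
    rw [hAc x (hMA hx) (y : H) (hMA y.2), mul_assoc, mul_inv_cancel, mul_one]
  set ρ : (H ⧸ M') →* MulAut ↥M' := QuotientGroup.lift M' MulAut.conjNormal hcond with hρdef
  have hρ : ∀ (h : H) (x : ↥M'), ((ρ (π h)) x : H) = h * (x : H) * h⁻¹ := by
    intro h x
    have : ρ (π h) = MulAut.conjNormal h := rfl
    rw [this, MulAut.conjNormal_apply]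
  -- section
  set s : (H ⧸ M') → H := Quotient.out with hsdef
  have hs : ∀ g : H ⧸ M', π (s g) = g := fun g => QuotientGroup.out_eq' g
  -- the cocycle-like map
  have htmem : ∀ (h : H) (k : H ⧸ M'), h * s k * (s (π h * k))⁻¹ ∈ M' := by
    intro h k
    rw [← hkeriff]
    rw [map_mul, map_mul, map_inv, hs, hs]
    exact mul_inv_cancel _
  set t : H → (H ⧸ M') → ↥M' := fun h k => ⟨h * s k * (s (π h * k))⁻¹, htmem h k⟩ with htdef
  set T : H → ↥M' := fun h => ∏ k, t h k with hTdef
  have hfac : ∀ (h₁ h₂ : H) (k : H ⧸ M'),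
      t (h₁ * h₂) k = ρ (π h₁) (t h₂ k) * t h₁ (π h₂ * k) := by
    intro h₁ h₂ k
    apply Subtype.ext
    show (h₁ * h₂) * s k * (s (π (h₁ * h₂) * k))⁻¹ =
      (h₁ * (h₂ * s k * (s (π h₂ * k))⁻¹) * h₁⁻¹) *
        (h₁ * s (π h₂ * k) * (s (π h₁ * (π h₂ * k)))⁻¹)
    · have e1 : π (h₁ * h₂) * k = π h₁ * (π h₂ * k) := by rw [map_mul, mul_assoc]
      rw [e1]
      group
  have hcoc : ∀ h₁ h₂ : H, T (h₁ * h₂) = T h₁ * ρ (π h₁) (T h₂) := by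
    intro h₁ h₂
    have : T (h₁ * h₂) = ∏ k, (ρ (π h₁) (t h₂ k) * t h₁ (π h₂ * k)) := by
      rw [hTdef]
      exact Finset.prod_congr rfl fun k _ => hfac h₁ h₂ k
    rw [this, Finset.prod_mul_distrib, ← map_prod]
    have hre : ∏ k, t h₁ (π h₂ * k) = ∏ k, t h₁ k :=
      Fintype.prod_equiv (Equiv.mulLeft (π h₂)) _ _ (fun k => rfl)
    rw [hre, mul_comm]
  -- the homomorphism
  set φ : H →* (↥M' ⋊[ρ] (H ⧸ M')) :=
    MonoidHom.mk' (fun h => ⟨T h, π h⟩)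
      (fun a b => SemidirectProduct.ext (by simp only [SemidirectProduct.mul_left]; exact hcoc a b)
        (by simp only [SemidirectProduct.mul_right]; exact map_mul π a b)) with hφdef
  have hφleft : ∀ h : H, (φ h).left = T h := fun h => rfl
  have hφright : ∀ h : H, (φ h).right = π h := fun h => rfl
  -- value of T on elements of M'
  have hTM : ∀ x : H, (hx : x ∈ M') → T x = (⟨x, hx⟩ : ↥M') ^ Fintype.card (H ⧸ M') := by
    intro x hx
    have hπx : π x = 1 := (hkeriff x).mpr hx
    have : ∀ k : H ⧸ M', t x k = ⟨x, hx⟩ := by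
      intro k
      apply Subtype.ext
      show x * s k * (s (π x * k))⁻¹ = x
      rw [hπx, one_mul, mul_assoc, mul_inv_cancel, mul_one]
    rw [hTdef]
    simp only [this]
    rw [Finset.prod_const, Finset.card_univ]
  -- injectivity
  have hinj : Function.Injective φ := by
    rw [injective_iff_map_eq_one φ]
    intro a ha
    have hright : π a = 1 := by
      have := congrArg SemidirectProduct.right ha
      simpa [hφright] using this
    have haM : a ∈ M' := (hkeriff a).mp hright
    have hleft : T a = 1 := by
      have := congrArg SemidirectProduct.left ha
      simpa [hφleft] using this
    have hTa := hTM a haM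
    rw [hleft] at hTa
    have hcard : Fintype.card (H ⧸ M') ≠ 0 := Fintype.card_ne_zero
    have := tf _ _ hcard hTa.symm
    exact congrArg Subtype.val this
  -- intersection property
  have hinter : ∀ x : ↥M',
      SemidirectProduct.inl x ∈ φ.range ↔ ∃ y : ↥M', y ^ Fintype.card (H ⧸ M') = x := by
    intro x
    constructor
    · rintro ⟨h, hh⟩
      have hr : π h = 1 := by
        have := congrArg SemidirectProduct.right hh
        simpa [hφright] using this
      have hhM : h ∈ M' := (hkeriff h).mp hr
      have hl : T h = x := by
        have := congrArg SemidirectProduct.left hh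
        simpa [hφleft] using this
      exact ⟨⟨h, hhM⟩, by rw [← hTM h hhM]; exact hl⟩
    · rintro ⟨y, rfl⟩
      refine ⟨(y : H), ?_⟩
      have h1 : π (y : H) = 1 := (hkeriff _).mpr y.2
      have h2 : T (y : H) = y ^ Fintype.card (H ⧸ M') := by
        have := hTM (y : H) y.2
        simpa using this
      apply SemidirectProduct.ext
      · rw [SemidirectProduct.left_inl, hφleft]
        exact h2
      · rw [SemidirectProduct.right_inl, hφright]
        exact h1
  -- surjectivity
  have hsurj : Function.Surjective (SemidirectProduct.rightHom.comp φ) := by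
    intro g
    refine ⟨s g, ?_⟩
    show SemidirectProduct.rightHom (φ (s g)) = g
    rw [SemidirectProduct.rightHom_eq_right]
    exact hs g
  exact ⟨@VirtAbelianEmbedding.mk H _ (H ⧸ M') _ iQ (↥M') iM iMF tf ρ φ hinj hinter hsurj⟩
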